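/- Let a, b ∈ ℝ with a < b. For every integer k ≥ 1, every real polynomial Q of degree at most k−1, and every real x ∉ (a,b), one has |Q(x)²·(1−x²)| ≤ |(4x − 2(a+b))/(b−a)|^{2k} · sup_{u∈[a,b]} |Q(u)²·(1−u²)|. -/

import Mathlib

open Polynomial

private lemma chebT_natDeg : ∀ m : ℕ, (Polynomial.Chebyshev.T ℝ (m : ℤ)).natDegree ≤ m := by
  intro m
  induction m using Nat.strong_induction_on with
  | _ m ih =>
    match m with
    | 0 => simp [Polynomial.Chebyshev.T_zero]
    | 1 => simpa [Polynomial.Chebyshev.T_one] using natDegree_X_le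
    | (m+2) =>
      have h2 := Polynomial.Chebyshev.T_add_two ℝ (m : ℤ)
      have hcast : ((m : ℤ) + 2) = ((m + 2 : ℕ) : ℤ) := by push_cast; ring
      rw [hcast] at h2
      rw [h2]
      refine le_trans (natDegree_sub_le _ _) ?_
      rw [max_le_iff]
      constructor
      · refine le_trans natDegree_mul_le ?_
        have h1 : ((m : ℤ) + 1) = ((m + 1 : ℕ) : ℤ) := by push_cast; ring
        rw [h1]
        have hih := ih (m + 1) (by omega)
        have hX : (2 * X : ℝ[X]).natDegree ≤ 1 := le_trans natDegree_mul_le (by simp)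
        omega
      · exact le_trans (ih m (by omega)) (by omega)

private lemma chebT_steps (y : ℝ) (hy : 1 ≤ y) :
    ∀ m : ℕ, 0 ≤ (Polynomial.Chebyshev.T ℝ (m : ℤ)).eval y ∧
      (Polynomial.Chebyshev.T ℝ (m : ℤ)).eval y ≤
        (Polynomial.Chebyshev.T ℝ ((m : ℤ) + 1)).eval y := by
  intro m
  induction m with
  | zero =>
    norm_num [Polynomial.Chebyshev.T_zero, Polynomial.Chebyshev.T_one]
    exact hy
  | succ m ih =>
    obtain ⟨h0, h1⟩ := ih
    have h2 := Polynomial.Chebyshev.T_add_two ℝ (m : ℤ)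
    have he : (Polynomial.Chebyshev.T ℝ ((m : ℤ) + 2)).eval y =
        2 * y * (Polynomial.Chebyshev.T ℝ ((m : ℤ) + 1)).eval y -
          (Polynomial.Chebyshev.T ℝ (m : ℤ)).eval y := by
      rw [h2]; simp
    have hc2 : ((m : ℤ) + 1 + 1) = (m : ℤ) + 2 := by ring
    rw [show (((m + 1 : ℕ)) : ℤ) = (m : ℤ) + 1 by push_cast; ring, hc2, he]
    constructor
    · linarith
    · nlinarith

private lemma chebT_le_pow (y : ℝ) (hy : 1 ≤ y) :
    ∀ m : ℕ, (Polynomial.Chebyshev.T ℝ (m : ℤ)).eval y ≤ (2 * y) ^ m := by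
  intro m
  induction m using Nat.strong_induction_on with
  | _ m ih =>
    match m with
    | 0 => simp [Polynomial.Chebyshev.T_zero]
    | 1 =>
      simp only [Nat.cast_one, Polynomial.Chebyshev.T_one, eval_X, pow_one]
      nlinarith
    | (m+2) =>
      have h2 := Polynomial.Chebyshev.T_add_two ℝ (m : ℤ)
      have hcast : ((m : ℤ) + 2) = ((m + 2 : ℕ) : ℤ) := by push_cast; ring
      rw [hcast] at h2
      have he : (Polynomial.Chebyshev.T ℝ ((m + 2 : ℕ) : ℤ)).eval y =
          2 * y * (Polynomial.Chebyshev.T ℝ ((m : ℤ) + 1)).eval y -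
            (Polynomial.Chebyshev.T ℝ (m : ℤ)).eval y := by
        rw [h2]; simp
      rw [he]
      have hc1 : ((m : ℤ) + 1) = ((m + 1 : ℕ) : ℤ) := by push_cast; ring
      rw [hc1]
      have hnn := (chebT_steps y hy m).1
      have hih := ih (m + 1) (by omega)
      have h2y : (0:ℝ) ≤ 2 * y := by linarith
      have hstep : 2 * y * (Polynomial.Chebyshev.T ℝ ((m + 1 : ℕ) : ℤ)).eval y ≤
          2 * y * (2 * y) ^ (m + 1) := mul_le_mul_of_nonneg_left hih h2y
      calc 2 * y * (Polynomial.Chebyshev.T ℝ ((m + 1 : ℕ) : ℤ)).eval y -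
            (Polynomial.Chebyshev.T ℝ (m : ℤ)).eval y
          ≤ 2 * y * (2 * y) ^ (m + 1) := by linarith
        _ = (2 * y) ^ (m + 2) := by ring

private lemma chebT_abs_bound (k : ℕ) (y : ℝ) (hy : 1 ≤ |y|) :
    0 ≤ (Polynomial.Chebyshev.T ℝ ((2 * k : ℕ) : ℤ)).eval y ∧
      (Polynomial.Chebyshev.T ℝ ((2 * k : ℕ) : ℤ)).eval y ≤ (2 * |y|) ^ (2 * k) := by
  have hy2 : 1 ≤ y ^ 2 := by nlinarith [sq_abs y]
  have hz : 1 ≤ 2 * y ^ 2 - 1 := by nlinarith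
  have hmul : ((2 * k : ℕ) : ℤ) = (k : ℤ) * 2 := by push_cast; ring
  have heval : (Polynomial.Chebyshev.T ℝ ((2 * k : ℕ) : ℤ)).eval y =
      (Polynomial.Chebyshev.T ℝ (k : ℤ)).eval (2 * y ^ 2 - 1) := by
    rw [hmul, Polynomial.Chebyshev.T_mul, eval_comp, Polynomial.Chebyshev.T_two]
    simp
  rw [heval]
  constructor
  · exact (chebT_steps _ hz k).1
  · calc (Polynomial.Chebyshev.T ℝ (k : ℤ)).eval (2 * y ^ 2 - 1)
        ≤ (2 * (2 * y ^ 2 - 1)) ^ k := chebT_le_pow _ hz k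
      _ ≤ (4 * y ^ 2) ^ k := by
          apply pow_le_pow_left₀ (by nlinarith) (by nlinarith)
      _ = (2 * |y|) ^ (2 * k) := by
          rw [pow_mul]
          congr 1
          rw [mul_pow]
          norm_num [sq_abs]

/-- Let `a < b`. For every integer `k ≥ 1`, every real polynomial `Q` of degree at
most `k-1`, and every real `x ∉ (a,b)`, one has
`|Q(x)² (1-x²)| ≤ |(4x - 2(a+b))/(b-a)|^(2k) sup_{u ∈ [a,b]} |Q(u)² (1-u²)|`. -/
theorem stmt_6 (a b : ℝ) (hab : a < b) (k : ℕ) (hk : 1 ≤ k) (Q : Polynomial ℝ)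
    (hQ : Q.natDegree ≤ k - 1) (x : ℝ) (hx : x ∉ Set.Ioo a b) :
    |Q.eval x ^ 2 * (1 - x ^ 2)| ≤ |(4 * x - 2 * (a + b)) / (b - a)| ^ (2 * k) *
      ⨆ u : Set.Icc a b, |Q.eval (u : ℝ) ^ 2 * (1 - (u : ℝ) ^ 2)| := by
  classical
  have hx' : x ≤ a ∨ b ≤ x := by
    simp only [Set.mem_Ioo, not_and, not_lt] at hx
    rcases le_or_gt x a with h | h
    · exact Or.inl h
    · exact Or.inr (hx h)
  have hn0 : 0 < 2 * k := by omega
  set c : ℝ := (a + b) / 2 with hc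
  set d : ℝ := (b - a) / 2 with hd
  have hd0 : 0 < d := by rw [hd]; linarith
  have hπ := Real.pi_pos
  set v : ℕ → ℝ := fun i => c + d * Real.cos (i * Real.pi / (2 * k)) with hv
  set s : Finset ℕ := Finset.range (2 * k + 1) with hs
  have hnpos : (0:ℝ) < (2 * k : ℕ) := by exact_mod_cast hn0
  have hθmem : ∀ i ∈ s, ((i : ℝ) * Real.pi / (2 * k)) ∈ Set.Icc 0 Real.pi := by
    intro i hi
    have hi' : (i : ℝ) ≤ (2 * k : ℕ) := by
      have : i ≤ 2 * k := by
        have := Finset.mem_range.mp hi; omega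
      exact_mod_cast this
    constructor
    · positivity
    · rw [div_le_iff₀ (by exact_mod_cast hnpos)]
      push_cast at hi' ⊢
      nlinarith [Nat.cast_nonneg (α := ℝ) i]
  have hvmono : ∀ i ∈ s, ∀ j ∈ s, i < j → v j < v i := by
    intro i hi j hj hij
    have hθ : (i : ℝ) * Real.pi / (2 * k) < (j : ℝ) * Real.pi / (2 * k) := by
      have hij' : (i : ℝ) < j := by exact_mod_cast hij
      have h2k : (0:ℝ) < 2 * (k:ℝ) := by push_cast at hnpos; linarith
      gcongr
    have hlt := Real.strictAntiOn_cos (hθmem i hi) (hθmem j hj) hθ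
    simp only [hv]
    nlinarith
  have hvinj : Set.InjOn v ↑s := by
    intro i hi j hj hij
    by_contra hne
    rcases Nat.lt_or_ge i j with h | h
    · exact (hvmono i (Finset.mem_coe.mp hi) j (Finset.mem_coe.mp hj) h).ne' hij
    · have h' : j < i := by omega
      exact (hvmono j (Finset.mem_coe.mp hj) i (Finset.mem_coe.mp hi) h').ne hij
  have hvmem : ∀ i ∈ s, v i ∈ Set.Icc a b := by
    intro i hi
    have h1 := Real.neg_one_le_cos ((i:ℝ) * Real.pi / (2 * k))
    have h2 := Real.cos_le_one ((i:ℝ) * Real.pi / (2 * k))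
    constructor <;> simp only [hv] <;> nlinarith
  set P : ℝ[X] := Q ^ 2 * (1 - X ^ 2) with hP
  have hPeval : ∀ t : ℝ, P.eval t = Q.eval t ^ 2 * (1 - t ^ 2) := by
    intro t; simp [hP]
  have hPdeg : P.natDegree ≤ 2 * k := by
    refine le_trans natDegree_mul_le ?_
    have h1 : (Q ^ 2).natDegree ≤ 2 * (k - 1) := by
      rw [natDegree_pow]; omega
    have h2 : ((1 : ℝ[X]) - X ^ 2).natDegree ≤ 2 :=
      le_trans (natDegree_sub_le _ _) (by simp)
    omega
  have hcard : s.card = 2 * k + 1 := Finset.card_range _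
  have hPdeg' : P.degree < (s.card : WithBot ℕ) := by
    rw [hcard]
    refine lt_of_le_of_lt degree_le_natDegree ?_
    exact_mod_cast Nat.lt_succ_of_le hPdeg
  -- the sup
  have hcont : ContinuousOn (fun t : ℝ => |Q.eval t ^ 2 * (1 - t ^ 2)|) (Set.Icc a b) :=
    (((Q.continuous_aeval.pow 2).mul (continuous_const.sub (continuous_pow 2))).abs).continuousOn
  set M := ⨆ u : Set.Icc a b, |Q.eval (u:ℝ) ^ 2 * (1 - (u:ℝ) ^ 2)| with hMdef
  have hbdd : BddAbove (Set.range fun u : Set.Icc a b =>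
      |Q.eval (u:ℝ) ^ 2 * (1 - (u:ℝ) ^ 2)|) := by
    have himg := (isCompact_Icc.image_of_continuousOn hcont).bddAbove
    obtain ⟨C, hC⟩ := himg
    refine ⟨C, ?_⟩
    rintro t ⟨u, rfl⟩
    exact hC (Set.mem_image_of_mem _ u.2)
  have hMle : ∀ t ∈ Set.Icc a b, |P.eval t| ≤ M := by
    intro t ht
    have hle := le_ciSup hbdd (⟨t, ht⟩ : Set.Icc a b)
    rw [hPeval t]
    exact hle
  have hM0 : 0 ≤ M := le_trans (abs_nonneg _) (hMle a ⟨le_refl a, le_of_lt hab⟩)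
  -- the Chebyshev comparison polynomial
  set Lp : ℝ[X] := C d⁻¹ * (X - C c) with hLp
  have hLeval : ∀ t : ℝ, Lp.eval t = (t - c) / d := by
    intro t; simp [hLp, div_eq_inv_mul]
  set f : ℝ[X] := (Polynomial.Chebyshev.T ℝ ((2 * k : ℕ) : ℤ)).comp Lp with hf
  have hfdeg : f.natDegree ≤ 2 * k := by
    refine le_trans natDegree_comp_le ?_
    have h1 : Lp.natDegree ≤ 1 := by
      refine le_trans natDegree_mul_le ?_
      simp [natDegree_X_sub_C]
    have h2 := chebT_natDeg (2 * k)
    calc (Polynomial.Chebyshev.T ℝ ((2 * k : ℕ) : ℤ)).natDegree * Lp.natDegree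
        ≤ (2 * k) * 1 := Nat.mul_le_mul h2 h1
      _ = 2 * k := mul_one _
  have hfdeg' : f.degree < (s.card : WithBot ℕ) := by
    rw [hcard]
    refine lt_of_le_of_lt degree_le_natDegree ?_
    exact_mod_cast Nat.lt_succ_of_le hfdeg
  have hfval : ∀ i ∈ s, f.eval (v i) = (-1 : ℝ) ^ i := by
    intro i hi
    have hLv : Lp.eval (v i) = Real.cos ((i:ℝ) * Real.pi / (2 * k)) := by
      rw [hLeval]
      simp only [hv]
      field_simp
      ring
    rw [hf, eval_comp, hLv, Polynomial.Chebyshev.T_real_cos]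
    have hne : (2 * (k:ℝ)) ≠ 0 := by push_cast at hnpos; linarith
    have harg : (((2 * k : ℕ) : ℤ) : ℝ) * ((i:ℝ) * Real.pi / (2 * k)) = (i : ℝ) * Real.pi := by
      push_cast
      field_simp
    rw [harg, ← sub_zero ((i:ℝ) * Real.pi), Real.cos_nat_mul_pi_sub, Real.cos_zero, mul_one]
  -- interpolation identities
  have hinterpP : P = Lagrange.interpolate s v (fun i => P.eval (v i)) :=
    Lagrange.eq_interpolate hvinj hPdeg'
  have hinterpf : f = Lagrange.interpolate s v (fun i => (-1 : ℝ) ^ i) :=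
    Lagrange.eq_interpolate_of_eval_eq _ hvinj hfdeg' hfval
  have hPx : P.eval x = ∑ i ∈ s, P.eval (v i) * (Lagrange.basis s v i).eval x := by
    conv_lhs => rw [hinterpP]
    simp [Lagrange.interpolate_apply, eval_finset_sum]
  have hfx : f.eval x = ∑ i ∈ s, (-1 : ℝ) ^ i * (Lagrange.basis s v i).eval x := by
    conv_lhs => rw [hinterpf]
    simp [Lagrange.interpolate_apply, eval_finset_sum]
  -- sign analysis
  obtain ⟨σ, hσ1, hσ2⟩ : ∃ σ : ℝ, (σ = 1 ∨ σ = -1) ∧ ∀ j ∈ s, 0 ≤ σ * (x - v j) := by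
    rcases hx' with h | h
    · exact ⟨-1, Or.inr rfl, fun j hj => by have := (hvmem j hj).1; nlinarith⟩
    · exact ⟨1, Or.inl rfl, fun j hj => by have := (hvmem j hj).2; nlinarith⟩
  have hσn : σ ^ (2 * k) = 1 := by
    rcases hσ1 with h | h
    · simp [h]
    · rw [h]
      exact Even.neg_one_pow ⟨k, by ring⟩
  have hsign : ∀ i ∈ s, 0 ≤ (-1 : ℝ) ^ i * (Lagrange.basis s v i).eval x := by
    intro i hi
    have hprod : (Lagrange.basis s v i).eval x =
        ∏ j ∈ s.erase i, ((v i - v j)⁻¹ * (x - v j)) := by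
      simp [Lagrange.basis, eval_prod, Lagrange.basisDivisor]
    have hcerase : (s.erase i).card = 2 * k := by
      rw [Finset.card_erase_of_mem hi, hcard]
      omega
    have hfilter : (s.erase i).filter (· < i) = Finset.range i := by
      ext j
      have hi' : i < 2 * k + 1 := Finset.mem_range.mp hi
      simp only [Finset.mem_filter, Finset.mem_erase, hs, Finset.mem_range]
      omega
    have hei : ∏ j ∈ s.erase i, (if j < i then (-1:ℝ) else 1) = (-1 : ℝ) ^ i := by
      rw [Finset.prod_ite, Finset.prod_const, Finset.prod_const, one_pow, mul_one,
        hfilter, Finset.card_range]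
    have heσ : (∏ _j ∈ s.erase i, σ) = σ ^ (2 * k) := by
      rw [Finset.prod_const, hcerase]
    have hkey : (-1:ℝ) ^ i * (Lagrange.basis s v i).eval x =
        ∏ j ∈ s.erase i,
          ((if j < i then (-1:ℝ) else 1) * σ * ((v i - v j)⁻¹ * (x - v j))) := by
      rw [Finset.prod_mul_distrib, Finset.prod_mul_distrib, hei, heσ, hσn, hprod]
      ring
    rw [hkey]
    apply Finset.prod_nonneg
    intro j hj
    obtain ⟨hjne, hjs⟩ := Finset.mem_erase.mp hj
    have hxj := hσ2 j hjs
    rcases Nat.lt_or_ge j i with hji | hji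
    · have hvij : v i < v j := hvmono j hjs i hi hji
      have hinv : (v i - v j)⁻¹ < 0 := inv_lt_zero.mpr (by linarith)
      rw [if_pos hji]
      have hre : (-1:ℝ) * σ * ((v i - v j)⁻¹ * (x - v j)) =
          (-(v i - v j)⁻¹) * (σ * (x - v j)) := by ring
      rw [hre]
      exact mul_nonneg (by linarith) hxj
    · have hij' : i < j := by omega
      have hvij : v j < v i := hvmono i hi j hjs hij'
      have hinv : 0 < (v i - v j)⁻¹ := inv_pos.mpr (by linarith)
      rw [if_neg (by omega : ¬ j < i)]
      have hre : (1:ℝ) * σ * ((v i - v j)⁻¹ * (x - v j)) =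
          (v i - v j)⁻¹ * (σ * (x - v j)) := by ring
      rw [hre]
      exact mul_nonneg hinv.le hxj
  have habs : ∀ i ∈ s, |(Lagrange.basis s v i).eval x| =
      (-1 : ℝ) ^ i * (Lagrange.basis s v i).eval x := by
    intro i hi
    have h1 : |(-1:ℝ) ^ i * (Lagrange.basis s v i).eval x| =
        |(Lagrange.basis s v i).eval x| := by
      rw [abs_mul, abs_pow, abs_neg, abs_one, one_pow, one_mul]
    rw [← h1, abs_of_nonneg (hsign i hi)]
  -- the variable y
  set y : ℝ := (x - c) / d with hy
  have hyabs : 1 ≤ |y| := by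
    rcases hx' with h | h
    · have hym : y ≤ -1 := by
        rw [hy, div_le_iff₀ hd0]
        rw [hc] at *
        rw [hd] at *
        linarith
      rw [le_abs]; right; linarith
    · have hym : 1 ≤ y := by
        rw [hy, le_div_iff₀ hd0]
        rw [hc] at *
        rw [hd] at *
        linarith
      rw [le_abs]; left; exact hym
  have hfxval : f.eval x = (Polynomial.Chebyshev.T ℝ ((2 * k : ℕ) : ℤ)).eval y := by
    rw [hf, eval_comp, hLeval]
  have hcheb := chebT_abs_bound k y hyabs
  have hchain : |P.eval x| ≤ M * (2 * |y|) ^ (2 * k) := by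
    calc |P.eval x| = |∑ i ∈ s, P.eval (v i) * (Lagrange.basis s v i).eval x| := by
          rw [hPx]
      _ ≤ ∑ i ∈ s, |P.eval (v i) * (Lagrange.basis s v i).eval x| :=
          Finset.abs_sum_le_sum_abs _ _
      _ ≤ ∑ i ∈ s, M * ((-1 : ℝ) ^ i * (Lagrange.basis s v i).eval x) := by
          refine Finset.sum_le_sum fun i hi => ?_
          rw [abs_mul, habs i hi]
          exact mul_le_mul_of_nonneg_right (hMle _ (hvmem i hi)) (hsign i hi)
      _ = M * ∑ i ∈ s, (-1 : ℝ) ^ i * (Lagrange.basis s v i).eval x := by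
          rw [Finset.mul_sum]
      _ = M * f.eval x := by rw [hfx]
      _ ≤ M * (2 * |y|) ^ (2 * k) := by
          rw [hfxval]
          exact mul_le_mul_of_nonneg_left hcheb.2 hM0
  have hfinal : |(4 * x - 2 * (a + b)) / (b - a)| = 2 * |y| := by
    have h2 : (4 * x - 2 * (a + b)) / (b - a) = 2 * y := by
      rw [hy, hc, hd]
      field_simp
      ring
    rw [h2, abs_mul]
    norm_num
  calc |Q.eval x ^ 2 * (1 - x ^ 2)| = |P.eval x| := by rw [hPeval x]
    _ ≤ M * (2 * |y|) ^ (2 * k) := hchain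
    _ = |(4 * x - 2 * (a + b)) / (b - a)| ^ (2 * k) * M := by rw [hfinal, mul_comm]
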